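/- Define A : ℕ → ℤ by A(-1)=1, A(0)=3, and A(n)=(n+3)A(n-1) - n·A(n-2) for n≥1. Then A(n) = ∑_{k=0}^{n+1} (k+1)! · C(n+1, k) for all n≥1. -/

import Mathlib

open Finset

def Tf (m : ℕ) : ℤ := ∑ k ∈ range (m+1), (Nat.factorial (k+1) : ℤ) * (Nat.choose m k : ℤ)
def Uf (m : ℕ) : ℤ := ∑ k ∈ range (m+1), (Nat.factorial (k+2) : ℤ) * (Nat.choose m k : ℤ)

lemma Ttail (m : ℕ) :
    ∑ k ∈ range (m+1), (Nat.factorial (k+2) : ℤ) * (Nat.choose m (k+1) : ℤ) = Tf m - 1 := by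
  unfold Tf
  rw [Finset.sum_range_succ' (fun k => (Nat.factorial (k+1) : ℤ) * (Nat.choose m k : ℤ)) m]
  rw [Finset.sum_range_succ (fun k => (Nat.factorial (k+2) : ℤ) * (Nat.choose m (k+1) : ℤ)) m]
  simp [Nat.choose_succ_self]

lemma TU (m : ℕ) : Tf (m+1) = Tf m + Uf m := by
  unfold Tf
  rw [Finset.sum_range_succ' (fun k => (Nat.factorial (k+1) : ℤ) * (Nat.choose (m+1) k : ℤ)) (m+1)]
  have h : ∀ k ∈ range (m+1), (Nat.factorial (k+1+1) : ℤ) * (Nat.choose (m+1) (k+1) : ℤ)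
      = (Nat.factorial (k+2) : ℤ) * (Nat.choose m k : ℤ)
        + (Nat.factorial (k+2) : ℤ) * (Nat.choose m (k+1) : ℤ) := by
    intro k _
    rw [Nat.choose_succ_succ]
    push_cast
    ring
  rw [Finset.sum_congr rfl h, Finset.sum_add_distrib, Ttail]
  unfold Tf Uf
  simp
  ring

lemma Utail (m : ℕ) :
    ∑ k ∈ range (m+1), (Nat.factorial (k+2) : ℤ) * (Nat.choose (m+1) (k+1) : ℤ) = Tf (m+1) - 1 := by
  unfold Tf
  rw [Finset.sum_range_succ' (fun k => (Nat.factorial (k+1) : ℤ) * (Nat.choose (m+1) k : ℤ)) (m+1)]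
  simp

lemma UR (m : ℕ) : Uf (m+1) = (m+1) * Uf m + 2 * Tf (m+1) := by
  unfold Uf
  rw [Finset.sum_range_succ' (fun k => (Nat.factorial (k+2) : ℤ) * (Nat.choose (m+1) k : ℤ)) (m+1)]
  have h : ∀ k ∈ range (m+1), (Nat.factorial (k+1+2) : ℤ) * (Nat.choose (m+1) (k+1) : ℤ)
      = (m+1 : ℤ) * ((Nat.factorial (k+2) : ℤ) * (Nat.choose m k : ℤ))
        + 2 * ((Nat.factorial (k+2) : ℤ) * (Nat.choose (m+1) (k+1) : ℤ)) := by
    intro k _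
    have key : (k+1) * Nat.choose (m+1) (k+1) = (m+1) * Nat.choose m k := by
      rw [mul_comm]
      exact (Nat.add_one_mul_choose_eq m k).symm
    have hf : (Nat.factorial (k+3) : ℤ) = (k+3) * Nat.factorial (k+2) := by
      rw [show k+3 = (k+2)+1 from rfl, Nat.factorial_succ]; push_cast; ring
    have key' : ((k:ℤ)+1) * (Nat.choose (m+1) (k+1) : ℤ) = ((m:ℤ)+1) * (Nat.choose m k : ℤ) := by
      exact_mod_cast congrArg (Nat.cast : ℕ → ℤ) key
    calc (Nat.factorial (k+1+2) : ℤ) * (Nat.choose (m+1) (k+1) : ℤ)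
        = (Nat.factorial (k+2) : ℤ) * (((k:ℤ)+1) * (Nat.choose (m+1) (k+1) : ℤ))
          + 2 * ((Nat.factorial (k+2) : ℤ) * (Nat.choose (m+1) (k+1) : ℤ)) := by
          rw [show k+1+2 = k+3 from rfl, hf]; ring
      _ = _ := by rw [key']; ring
  rw [Finset.sum_congr rfl h, Finset.sum_add_distrib, ← Finset.mul_sum, ← Finset.mul_sum, Utail]
  show _ = (↑(m+1) : ℤ) * _ + _
  simp [Nat.factorial]
  ring
lemma Trec (m : ℕ) : Tf (m+2) = ((m:ℤ)+4) * Tf (m+1) - ((m:ℤ)+1) * Tf m := by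
  have h4 : Uf m = Tf (m+1) - Tf m := by have := TU m; linarith
  have h1 := TU (m+1)
  have h2 := UR m
  rw [show m+2 = m+1+1 from rfl, h1, h2, h4]
  ring

theorem stmt8 (A : ℤ → ℤ)
    (hA1 : A (-1) = 1) (hA0 : A 0 = 3)
    (hArec : ∀ n : ℤ, 1 ≤ n → A n = (n + 3) * A (n - 1) - n * A (n - 2)) :
    ∀ n : ℕ, 1 ≤ n → A (n : ℤ) =
      ∑ k ∈ Finset.range (n + 2), (Nat.factorial (k + 1) : ℤ) * (Nat.choose (n + 1) k : ℤ) := by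
  have key : ∀ n : ℕ, A (n : ℤ) = Tf (n+1) ∧ A ((n : ℤ)+1) = Tf (n+2) := by
    intro n
    induction n with
    | zero =>
      constructor
      · simp only [Nat.cast_zero, hA0]
        norm_num [Tf, Finset.sum_range_succ, Nat.factorial]
      · have h := hArec 1 le_rfl
        norm_num [hA0, hA1] at h
        simp only [Nat.cast_zero, zero_add, h]
        norm_num [Tf, Finset.sum_range_succ, Nat.factorial]
    | succ n ih =>
      obtain ⟨ih1, ih2⟩ := ih
      have eT : Tf (n+1+1) = Tf (n+2) := by congr 1
      constructor
      · push_cast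
        rw [eT]
        exact ih2
      · push_cast
        have e3 : ((n:ℤ)+1)+1 = (n:ℤ)+2 := by ring
        rw [e3]
        have h := hArec ((n:ℤ)+2) (by omega)
        have e1 : ((n:ℤ)+2) - 1 = (n:ℤ)+1 := by ring
        have e2 : ((n:ℤ)+2) - 2 = (n:ℤ) := by ring
        rw [e1, e2, ih1, ih2] at h
        have hT := Trec (n+1)
        rw [eT, show n+1+2 = n+3 by omega] at hT
        push_cast at hT
        rw [show Tf (n+1+2) = Tf (n+3) by congr 1, h, hT]
        ring
  intro n _
  have := (key n).1
  rw [this]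
  rfl
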